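/- Let {·,·} be a Poisson bracket on a commutative ring (or algebra) A (bilinear, antisymmetric, satisfying the Jacobi identity and the Leibniz rule). Let x^1, x^2, x^3 ∈ A, set γ² = {x¹,x²}² + {x²,x³}² + {x³,x¹}², and assume γ is invertible with γ² = γ·γ. Then for each i ∈ {1,2,3}: ∑_{j,k,l,n=1}^{3} (1/2) ε_{kln} { γ^{-2} {x^i, x^j}{x^j, x^k}, γ^{-1}{x^l, x^n} } = 0, where ε is the Levi-Civita symbol. -/
import Mathlib


open scoped BigOperators

/-- The totally antisymmetric Levi-Civita symbol on `n` indices. -/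
noncomputable def leviCivita {n : ℕ} (σ : Fin n → Fin n) : ℝ :=
  if h : Function.Bijective σ then ((Equiv.Perm.sign (Equiv.ofBijective σ h) : ℤ) : ℝ) else 0

private lemma half {M : Type*} [AddCommGroup M] [Module ℝ M] {p q : M} (h : p + p = q + q) : p = q := by
  have h2 : (2:ℝ) • p = (2:ℝ) • q := by rw [two_smul, two_smul, h]
  calc p = (2⁻¹:ℝ) • ((2:ℝ) • p) := by rw [smul_smul]; norm_num
  _ = (2⁻¹:ℝ) • ((2:ℝ) • q) := by rw [h2]
  _ = q := by rw [smul_smul]; norm_num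

private lemma lc_aab (a b : Fin 3) : leviCivita ![a,a,b] = 0 := by
  rw [leviCivita, dif_neg]
  intro h
  exact absurd (h.injective (a₁ := 0) (a₂ := 1) rfl) (by decide)

private lemma lc_aba (a b : Fin 3) : leviCivita ![a,b,a] = 0 := by
  rw [leviCivita, dif_neg]
  intro h
  exact absurd (h.injective (a₁ := 0) (a₂ := 2) rfl) (by decide)

private lemma lc_baa (a b : Fin 3) : leviCivita ![b,a,a] = 0 := by
  rw [leviCivita, dif_neg]
  intro h
  exact absurd (h.injective (a₁ := 1) (a₂ := 2) rfl) (by decide)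

private lemma lc_of_perm (f : Fin 3 → Fin 3) (σ : Equiv.Perm (Fin 3)) (h : ∀ x, f x = σ x) :
    leviCivita f = ((Equiv.Perm.sign σ : ℤ) : ℝ) := by
  have hf : f = ⇑σ := funext h
  subst hf
  rw [leviCivita, dif_pos σ.bijective]
  have : Equiv.ofBijective (⇑σ) σ.bijective = σ := Equiv.ext fun x => rfl
  rw [this]

private lemma lc012 : leviCivita ![0,1,2] = 1 := by
  rw [lc_of_perm _ (Equiv.refl _) (by decide)]; simp

private lemma lc102 : leviCivita ![1,0,2] = -1 := by
  rw [lc_of_perm _ (Equiv.swap 0 1) (by decide), Equiv.Perm.sign_swap (by decide)]; norm_num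

private lemma lc021 : leviCivita ![0,2,1] = -1 := by
  rw [lc_of_perm _ (Equiv.swap 1 2) (by decide), Equiv.Perm.sign_swap (by decide)]; norm_num

private lemma lc210 : leviCivita ![2,1,0] = -1 := by
  rw [lc_of_perm _ (Equiv.swap 0 2) (by decide), Equiv.Perm.sign_swap (by decide)]; norm_num

private lemma lc120 : leviCivita ![1,2,0] = 1 := by
  rw [lc_of_perm _ (Equiv.swap 0 1 * Equiv.swap 1 2) (by decide)]
  rw [map_mul, Equiv.Perm.sign_swap (by decide), Equiv.Perm.sign_swap (by decide)]; norm_num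

private lemma lc201 : leviCivita ![2,0,1] = 1 := by
  rw [lc_of_perm _ (Equiv.swap 1 2 * Equiv.swap 0 1) (by decide)]
  rw [map_mul, Equiv.Perm.sign_swap (by decide), Equiv.Perm.sign_swap (by decide)]; norm_num
private lemma key {A : Type*} [CommRing A] [Algebra ℝ A] (br : A → A → A)
    (hadd : ∀ a b c : A, br (a + b) c = br a c + br b c)
    (hskew : ∀ a b : A, br a b = -br b a)
    (hleibniz : ∀ a b c : A, br a (b * c) = br a b * c + b * br a c)
    (u γ a b c : A) (hinv : γ * u = 1)
    (hsq : γ * γ = a * a + b * b + c * c) :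
    br (u*u*(b*a)) (u*b) + br (u*u*(c*a)) (u*c)
      - br (u*u*(b*b)) (u*a) - br (u*u*(c*c)) (u*a) = 0 := by
  have half : ∀ p q : A, p + p = q + q → p = q := by
    intro p q h
    have h2 : (2:ℝ) • p = (2:ℝ) • q := by rw [two_smul, two_smul, h]
    calc p = (2⁻¹:ℝ) • ((2:ℝ) • p) := by rw [smul_smul]; norm_num
    _ = (2⁻¹:ℝ) • ((2:ℝ) • q) := by rw [h2]
    _ = q := by rw [smul_smul]; norm_num
  have braa : ∀ p : A, br p p = 0 := fun p => half _ 0 (by linear_combination hskew p p)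
  have br1 : ∀ y : A, br y 1 = 0 := by
    intro y
    have h := hleibniz y 1 1
    rw [mul_one] at h
    linear_combination -h
  have br2add : ∀ y p q : A, br y (p + q) = br y p + br y q := by
    intro y p q
    rw [hskew y (p + q), hadd, hskew p y, hskew q y]; ring
  have hbru : ∀ y : A, br y u = -(u * u * br y γ) := by
    intro y
    have h1 : br y (γ * u) = 0 := by rw [hinv]; exact br1 y
    rw [hleibniz] at h1
    linear_combination u * h1 - br y u * hinv
  have leib₁ : ∀ p q r : A, br (p*q) r = p * br q r + q * br p r := by
    intro p q r
    rw [hskew (p*q) r, hleibniz r p q, hskew r p, hskew r q]; ring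
  have hgam : ∀ y : A, γ * br y γ = a * br y a + b * br y b + c * br y c := by
    intro y
    have h1 : br y (γ*γ) = br y (a*a + (b*b + c*c)) := by rw [hsq]; ring_nf
    rw [hleibniz, br2add, br2add, hleibniz, hleibniz, hleibniz] at h1
    exact half _ _ (by linear_combination h1)
  have e2 : ∀ y : A, br u y = -br y u := fun y => hskew u y
  have hga : γ * br a γ = b * br a b + c * br a c := by
    have h := hgam a; rw [braa a] at h; linear_combination h
  have hgg : a * br a γ + b * br b γ + c * br c γ = 0 := by
    have h := hgam γ
    rw [braa γ, hskew γ a, hskew γ b, hskew γ c] at h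
    linear_combination h
  simp only [hleibniz]
  simp only [leib₁]
  simp only [braa]
  simp only [e2, hskew b a, hskew c a]
  simp only [hbru]
  linear_combination (-3*u^3)*hga + (3*u^4*a)*hgg + (3*u^4*br a γ)*hsq + (-3*u^3*γ*br a γ)*hinv

/-- For an arbitrary Poisson bracket on a commutative algebra `A` and elements
`x¹, x², x³ ∈ A`, with `γ² = {x¹,x²}² + {x²,x³}² + {x³,x¹}²` and `γ` invertible,
the Poisson-algebraic Codazzi–Mainardi expression
`∑ (1/2) ε_{kln} {γ⁻²{xⁱ,xʲ}{xʲ,xᵏ}, γ⁻¹{xˡ,xⁿ}}` vanishes for each `i`. -/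
theorem codazzi_mainardi_poisson_identity {A : Type*} [CommRing A] [Algebra ℝ A]
    (br : A → A → A)
    (hadd : ∀ a b c : A, br (a + b) c = br a c + br b c)
    (hsmul : ∀ (r : ℝ) (a b : A), br (r • a) b = r • br a b)
    (hskew : ∀ a b : A, br a b = -br b a)
    (hjacobi : ∀ a b c : A, br a (br b c) + br b (br c a) + br c (br a b) = 0)
    (hleibniz : ∀ a b c : A, br a (b * c) = br a b * c + b * br a c)
    (x : Fin 3 → A) (γ γi : A)
    (hγinv : γ * γi = 1)
    (hγsq : γ * γ =
      br (x 0) (x 1) ^ 2 + br (x 1) (x 2) ^ 2 + br (x 2) (x 0) ^ 2)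
    (i : Fin 3) :
    ∑ j : Fin 3, ∑ k : Fin 3, ∑ l : Fin 3, ∑ m : Fin 3,
      ((1 / 2 : ℝ) * leviCivita ![k, l, m]) •
        br (γi * γi * (br (x i) (x j) * br (x j) (x k)))
           (γi * br (x l) (x m)) = 0 := by
  have half' : ∀ p q : A, p + p = q + q → p = q := fun p q h => half h
  have braa : ∀ p : A, br p p = 0 := fun p => half' _ 0 (by linear_combination hskew p p)
  have br0 : ∀ y : A, br 0 y = 0 := by
    intro y
    have h := hadd 0 0 y
    rw [add_zero] at h
    linear_combination -h
  have brneg₁ : ∀ p q : A, br (-p) q = -br p q := by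
    intro p q
    have h := hadd (-p) p q
    rw [neg_add_cancel, br0] at h
    linear_combination -h
  have brneg₂ : ∀ p q : A, br p (-q) = -br p q := by
    intro p q
    rw [hskew p (-q), brneg₁, hskew q p]; ring
  fin_cases i <;> simp only [Fin.zero_eta, Fin.mk_one, Fin.reduceFinMk]
  · simp only [Fin.sum_univ_three, lc_aab, lc_aba, lc_baa, lc012, lc021, lc102, lc120, lc201, lc210]
    simp only [Fin.isValue, mul_zero, zero_smul, mul_one, mul_neg_one, add_zero, zero_add, neg_smul]
    simp only [braa, hskew (x 1) (x 0), hskew (x 2) (x 1), hskew (x 0) (x 2)]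
    simp only [mul_neg, neg_mul, neg_neg, mul_zero, zero_mul, br0, brneg₁, brneg₂, smul_neg, neg_zero, add_zero, zero_add, smul_zero]
    have hsq0 : γ * γ = br (x 1) (x 2) * br (x 1) (x 2) + br (x 0) (x 1) * br (x 0) (x 1) + br (x 2) (x 0) * br (x 2) (x 0) := by linear_combination hγsq
    have k0 := key br hadd hskew hleibniz γi γ (br (x 1) (x 2)) (br (x 0) (x 1)) (br (x 2) (x 0)) hγinv hsq0
    simp only [Algebra.smul_def]
    linear_combination (2 * (algebraMap ℝ A) (1/2)) * k0
  · simp only [Fin.sum_univ_three, lc_aab, lc_aba, lc_baa, lc012, lc021, lc102, lc120, lc201, lc210]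
    simp only [Fin.isValue, mul_zero, zero_smul, mul_one, mul_neg_one, add_zero, zero_add, neg_smul]
    simp only [braa, hskew (x 1) (x 0), hskew (x 2) (x 1), hskew (x 0) (x 2)]
    simp only [mul_neg, neg_mul, neg_neg, mul_zero, zero_mul, br0, brneg₁, brneg₂, smul_neg, neg_zero, add_zero, zero_add, smul_zero]
    have hsq1 : γ * γ = br (x 2) (x 0) * br (x 2) (x 0) + br (x 1) (x 2) * br (x 1) (x 2) + br (x 0) (x 1) * br (x 0) (x 1) := by linear_combination hγsq
    have k1 := key br hadd hskew hleibniz γi γ (br (x 2) (x 0)) (br (x 1) (x 2)) (br (x 0) (x 1)) hγinv hsq1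
    simp only [Algebra.smul_def]
    linear_combination (2 * (algebraMap ℝ A) (1/2)) * k1
  · simp only [Fin.sum_univ_three, lc_aab, lc_aba, lc_baa, lc012, lc021, lc102, lc120, lc201, lc210]
    simp only [Fin.isValue, mul_zero, zero_smul, mul_one, mul_neg_one, add_zero, zero_add, neg_smul]
    simp only [braa, hskew (x 1) (x 0), hskew (x 2) (x 1), hskew (x 0) (x 2)]
    simp only [mul_neg, neg_mul, neg_neg, mul_zero, zero_mul, br0, brneg₁, brneg₂, smul_neg, neg_zero, add_zero, zero_add, smul_zero]
    have hsq2 : γ * γ = br (x 0) (x 1) * br (x 0) (x 1) + br (x 1) (x 2) * br (x 1) (x 2) + br (x 2) (x 0) * br (x 2) (x 0) := by linear_combination hγsq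
    have k2 := key br hadd hskew hleibniz γi γ (br (x 0) (x 1)) (br (x 1) (x 2)) (br (x 2) (x 0)) hγinv hsq2
    simp only [Algebra.smul_def]
    linear_combination (2 * (algebraMap ℝ A) (1/2)) * k2
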